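/- Let G be a compact Lie group of adjoint type and A a maximal abelian subgroup. Then A is saturated, i.e., Sat(A) = A, where Sat(A) = {g ∈ G : Ad(g) is a scalar on every A-weight space of the complexified Lie algebra}. -/

import Mathlib

/-- A maximal abelian subgroup is saturated.  Let `G` be a compact Lie group of adjoint type,
modelled by an injective adjoint representation `Ad : G →* GL(𝔤)` on its complexified
finite-dimensional Lie algebra `𝔤`, acting by Lie algebra automorphisms, and let `A` be a
maximal abelian subgroup.  Under the weight decomposition of `𝔤` for `A`, the saturation
`Sat(A) = {g ∈ G : Ad(g) is a scalar on every A-weight space}` equals `A`. -/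
theorem maximal_abelian_saturated
    (G : Type*) [Group G] [TopologicalSpace G] [IsTopologicalGroup G] [CompactSpace G]
    (𝔤 : Type*) [LieRing 𝔤] [LieAlgebra ℂ 𝔤] [FiniteDimensional ℂ 𝔤]
    (Ad : G →* (𝔤 ≃ₗ[ℂ] 𝔤))
    (hbr : ∀ (g : G) (x y : 𝔤), Ad g ⁅x, y⁆ = ⁅Ad g x, Ad g y⁆)
    (hinj : Function.Injective Ad)
    (A : Subgroup G) (hA : ∀ a ∈ A, ∀ b ∈ A, a * b = b * a)
    (hmax : ∀ B : Subgroup G, (∀ x ∈ B, ∀ y ∈ B, x * y = y * x) → A ≤ B → B = A)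
    (hdec : Submodule.span ℂ
        {v : 𝔤 | ∃ α : A → ℂ, ∀ a : A, Ad ↑a v = α a • v} = ⊤) :
    {g : G | ∀ α : A → ℂ, ∃ c : ℂ,
        ∀ v : 𝔤, (∀ a' : A, Ad ↑a' v = α a' • v) → Ad g v = c • v} = (A : Set G) := by
  ext g
  simp only [Set.mem_setOf_eq, SetLike.mem_coe]
  constructor
  · intro hg
    -- `g` commutes with every element of `A`
    have key : ∀ a ∈ A, g * a = a * g := by
      intro a ha
      apply hinj
      have heq : ∀ v ∈ {v : 𝔤 | ∃ α : A → ℂ, ∀ a : A, Ad ↑a v = α a • v},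
          (Ad (g * a) : 𝔤 →ₗ[ℂ] 𝔤) v = (Ad (a * g) : 𝔤 →ₗ[ℂ] 𝔤) v := by
        rintro v ⟨α, hα⟩
        obtain ⟨c, hc⟩ := hg α
        have hv := hc v hα
        have hav : Ad a v = α ⟨a, ha⟩ • v := hα ⟨a, ha⟩
        have h1 : Ad (g * a) v = α ⟨a, ha⟩ • c • v := by
          rw [map_mul]
          show Ad g (Ad a v) = _
          rw [hav, map_smul, hv]
        have h2 : Ad (a * g) v = c • α ⟨a, ha⟩ • v := by
          rw [map_mul]
          show Ad a (Ad g v) = _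
          rw [hv, map_smul, hav]
        show Ad (g * a) v = Ad (a * g) v
        rw [h1, h2, smul_comm]
      exact LinearEquiv.toLinearMap_injective (LinearMap.ext_on hdec heq)
    -- the subgroup generated by `A` and `g` is abelian
    set B : Subgroup G := Subgroup.closure ((A : Set G) ∪ {g}) with hB
    have hgen : ∀ x ∈ ((A : Set G) ∪ {g}), ∀ y ∈ ((A : Set G) ∪ {g}), x * y = y * x := by
      rintro x (hx | hx) y (hy | hy)
      · exact hA x hx y hy
      · rw [Set.mem_singleton_iff] at hy; subst hy; exact (key x hx).symm
      · rw [Set.mem_singleton_iff] at hx; subst hx; exact key y hy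
      · rw [Set.mem_singleton_iff] at hx hy; subst hx; subst hy; rfl
    have hcomm : ∀ x ∈ B, ∀ y ∈ B, x * y = y * x := by
      intro x hx y hy
      induction hx, hy using Subgroup.closure_induction₂ with
      | mem x y hx hy => exact hgen x hx y hy
      | one_left x hx => simp
      | one_right x hx => simp
      | mul_left x y z hx hy hz h1 h2 => rw [mul_assoc, h2, ← mul_assoc, h1, mul_assoc]
      | mul_right y z x hy hz hx h1 h2 => rw [← mul_assoc, h1, mul_assoc, h2, ← mul_assoc]
      | inv_left x y hx hy h => exact (Commute.inv_left h).eq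
      | inv_right x y hx hy h => exact (Commute.inv_right h).eq
    have hAB : A ≤ B := fun x hx =>
      Subgroup.subset_closure (Set.mem_union_left _ hx)
    have hBA : B = A := hmax B hcomm hAB
    have : g ∈ B := Subgroup.subset_closure (Set.mem_union_right _ rfl)
    rwa [hBA] at this
  · intro ha α
    exact ⟨α ⟨g, ha⟩, fun v hv => hv ⟨g, ha⟩⟩
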